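/- Let A, B, C, D partition X with sizes a, b, c, d, and let p_{AB} and p_{AC} be defined via the coefficient formulas (p_{AC} obtained from p_{AB} by swapping the roles of B and C). Then p_{AB}·p_{AC} = (−(bc+ad)/√((a+b)(a+c)(b+d)(c+d))) · ‖p_{AB}‖·‖p_{AC}‖; equivalently, the cosine of the angle between p_{AB} and p_{AC} is −(bc+ad)/√((a+b)(a+c)(b+d)(c+d)). -/

import Mathlib

open Finset
open scoped Classical

variable {X : Type*} [Fintype X] [DecidableEq X]

/-- Split pseudometric: coordinate at pair s is 1 if s meets both U and V, else 0. -/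
noncomputable def splitDelta (U V : Finset X) : EuclideanSpace ℝ (Sym2 X) :=
  WithLp.toLp 2 (fun s => if (∃ i ∈ s, i ∈ U) ∧ (∃ j ∈ s, j ∈ V) then (1 : ℝ) else 0)

lemma splitDelta_comm (U V : Finset X) : splitDelta U V = splitDelta V U := by
  ext s
  simp only [splitDelta, PiLp.toLp_apply]
  congr 1
  exact propext and_comm

lemma card_cross {U V : Finset X} (h : Disjoint U V) :
    (Finset.univ.filter (fun s : Sym2 X =>
      (∃ i ∈ s, i ∈ U) ∧ (∃ j ∈ s, j ∈ V))).card = U.card * V.card := by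
  rw [← Finset.card_product]
  symm
  refine Finset.card_bij (fun p _ => Sym2.mk p.1 p.2) ?_ ?_ ?_
  · rintro ⟨u, v⟩ hp
    rw [Finset.mem_product] at hp
    simp only [Finset.mem_filter, Finset.mem_univ, true_and]
    exact ⟨⟨u, by simp, hp.1⟩, ⟨v, by simp, hp.2⟩⟩
  · rintro ⟨u, v⟩ hp ⟨u', v'⟩ hp' heq
    rw [Finset.mem_product] at hp hp'
    rw [Sym2.mk_eq_mk_iff] at heq
    rcases heq with heq | heq
    · simpa using heq
    · simp only [Prod.swap_prod_mk, Prod.mk.injEq] at heq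
      exact absurd hp.1 (by rw [heq.1]; exact Finset.disjoint_right.mp h hp'.2)
  · intro s hs
    simp only [Finset.mem_filter, Finset.mem_univ, true_and] at hs
    obtain ⟨⟨i, hi, hiU⟩, ⟨j, hj, hjV⟩⟩ := hs
    have hne : i ≠ j := fun hij => Finset.disjoint_left.mp h hiU (hij ▸ hjV)
    refine ⟨(i, j), Finset.mem_product.mpr ⟨hiU, hjV⟩, ?_⟩
    exact ((Sym2.mem_and_mem_iff hne).mp ⟨hi, hj⟩).symm

lemma inner_splitDelta_self {U V : Finset X} (h : Disjoint U V) :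
    (inner ℝ (splitDelta U V) (splitDelta U V) : ℝ) = U.card * V.card := by
  simp only [splitDelta, PiLp.inner_apply, RCLike.inner_apply, conj_trivial]
  have : ∀ s : Sym2 X,
      (if (∃ i ∈ s, i ∈ U) ∧ (∃ j ∈ s, j ∈ V) then (1:ℝ) else 0) *
      (if (∃ i ∈ s, i ∈ U) ∧ (∃ j ∈ s, j ∈ V) then (1:ℝ) else 0) =
      (if (∃ i ∈ s, i ∈ U) ∧ (∃ j ∈ s, j ∈ V) then (1:ℝ) else 0) := by
    intro s; split_ifs <;> ring
  rw [Finset.sum_congr rfl fun s _ => this s, Finset.sum_boole]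
  norm_cast
  exact card_cross h

lemma inner_splitDelta_zero {U V W Z : Finset X} (hUV : Disjoint U V)
    (hZU : Disjoint Z U) (hZV : Disjoint Z V) :
    (inner ℝ (splitDelta U V) (splitDelta W Z) : ℝ) = 0 := by
  simp only [splitDelta, PiLp.inner_apply, RCLike.inner_apply, conj_trivial]
  refine Finset.sum_eq_zero fun s _ => ?_
  rw [mul_comm]
  induction s using Sym2.ind with
  | _ x y =>
    rcases Classical.em ((∃ i ∈ s(x, y), i ∈ U) ∧ ∃ j ∈ s(x, y), j ∈ V) with h1 | h1
    · obtain ⟨⟨i, hi, hiU⟩, ⟨j, hj, hjV⟩⟩ := h1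
      rw [if_pos ⟨⟨i, hi, hiU⟩, ⟨j, hj, hjV⟩⟩]
      have hij : i ≠ j := fun e => Finset.disjoint_left.mp hUV hiU (e ▸ hjV)
      rw [if_neg, mul_zero]
      rintro ⟨-, ⟨l, hl, hlZ⟩⟩
      rw [Sym2.mem_iff] at hi hj hl
      have : l ∈ U ∨ l ∈ V := by
        rcases hl with rfl | rfl <;> rcases hi with rfl | rfl <;>
          rcases hj with rfl | rfl <;> simp_all
      rcases this with hh | hh
      · exact Finset.disjoint_left.mp hZU hlZ hh
      · exact Finset.disjoint_left.mp hZV hlZ hh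
    · rw [if_neg h1, zero_mul]

lemma inner_splitDelta_zero' {U V W Z : Finset X} (hUV : Disjoint U V)
    (hWU : Disjoint W U) (hWV : Disjoint W V) :
    (inner ℝ (splitDelta U V) (splitDelta W Z) : ℝ) = 0 := by
  rw [splitDelta_comm W Z]; exact inner_splitDelta_zero hUV hWU hWV


set_option maxHeartbeats 2000000 in
/-- The cosine of the angle between p_{AB} and p_{AC} is
−(bc+ad)/√((a+b)(a+c)(b+d)(c+d)). -/
theorem cos_angle_pAB_pAC (A B C D : Finset X)
    (hA : A.Nonempty) (hB : B.Nonempty) (hC : C.Nonempty) (hD : D.Nonempty)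
    (hAB : Disjoint A B) (hAC : Disjoint A C) (hAD : Disjoint A D)
    (hBC : Disjoint B C) (hBD : Disjoint B D) (hCD : Disjoint C D)
    (hcover : A ∪ B ∪ C ∪ D = Finset.univ) :
    let a : ℝ := A.card; let b : ℝ := B.card; let c : ℝ := C.card; let d : ℝ := D.card
    let pAB := (((a + b) * c * d * (c + d)) • splitDelta A B +
        (-(b * d * (b * c + a * d))) • splitDelta A C +
        (-(b * c * (a * c + b * d))) • splitDelta A D +
        (-(a * d * (a * c + b * d))) • splitDelta B C +
        (-(a * c * (b * c + a * d))) • splitDelta B D +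
        (a * b * (a + b) * (c + d)) • splitDelta C D : EuclideanSpace ℝ (Sym2 X))
    let pAC := (((a + c) * b * d * (b + d)) • splitDelta A C +
        (-(c * d * (b * c + a * d))) • splitDelta A B +
        (-(c * b * (a * b + c * d))) • splitDelta A D +
        (-(a * d * (a * b + c * d))) • splitDelta C B +
        (-(a * b * (b * c + a * d))) • splitDelta C D +
        (a * c * (a + c) * (b + d)) • splitDelta B D : EuclideanSpace ℝ (Sym2 X))
    (inner ℝ pAB pAC : ℝ) =
      (-(b * c + a * d) / Real.sqrt ((a + b) * (a + c) * (b + d) * (c + d))) *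
        (‖pAB‖ * ‖pAC‖) := by
    intro a b c d pAB pAC
    have ha0 : (0:ℝ) < a := by
      show (0:ℝ) < (A.card : ℝ); exact_mod_cast Finset.card_pos.mpr hA
    have hb0 : (0:ℝ) < b := by
      show (0:ℝ) < (B.card : ℝ); exact_mod_cast Finset.card_pos.mpr hB
    have hc0 : (0:ℝ) < c := by
      show (0:ℝ) < (C.card : ℝ); exact_mod_cast Finset.card_pos.mpr hC
    have hd0 : (0:ℝ) < d := by
      show (0:ℝ) < (D.card : ℝ); exact_mod_cast Finset.card_pos.mpr hD
    have hpx : pAB = (((a + b) * c * d * (c + d)) • splitDelta A B +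
        (-(b * d * (b * c + a * d))) • splitDelta A C +
        (-(b * c * (a * c + b * d))) • splitDelta A D +
        (-(a * d * (a * c + b * d))) • splitDelta B C +
        (-(a * c * (b * c + a * d))) • splitDelta B D +
        (a * b * (a + b) * (c + d)) • splitDelta C D : EuclideanSpace ℝ (Sym2 X)) := rfl
    have hpy : pAC = (((a + c) * b * d * (b + d)) • splitDelta A C +
        (-(c * d * (b * c + a * d))) • splitDelta A B +
        (-(c * b * (a * b + c * d))) • splitDelta A D +
        (-(a * d * (a * b + c * d))) • splitDelta C B +
        (-(a * b * (b * c + a * d))) • splitDelta C D +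
        (a * c * (a + c) * (b + d)) • splitDelta B D : EuclideanSpace ℝ (Sym2 X)) := rfl
    have hABAB : (inner ℝ (splitDelta A B) (splitDelta A B) : ℝ) = a * b := inner_splitDelta_self hAB
    have hABAC : (inner ℝ (splitDelta A B) (splitDelta A C) : ℝ) = 0 := inner_splitDelta_zero hAB hAC.symm hBC.symm
    have hABAD : (inner ℝ (splitDelta A B) (splitDelta A D) : ℝ) = 0 := inner_splitDelta_zero hAB hAD.symm hBD.symm
    have hABBC : (inner ℝ (splitDelta A B) (splitDelta B C) : ℝ) = 0 := inner_splitDelta_zero hAB hAC.symm hBC.symm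
    have hABBD : (inner ℝ (splitDelta A B) (splitDelta B D) : ℝ) = 0 := inner_splitDelta_zero hAB hAD.symm hBD.symm
    have hABCD : (inner ℝ (splitDelta A B) (splitDelta C D) : ℝ) = 0 := inner_splitDelta_zero hAB hAD.symm hBD.symm
    have hABCB : (inner ℝ (splitDelta A B) (splitDelta C B) : ℝ) = 0 := inner_splitDelta_zero' hAB hAC.symm hBC.symm
    have hACAB : (inner ℝ (splitDelta A C) (splitDelta A B) : ℝ) = 0 := inner_splitDelta_zero hAC hAB.symm hBC
    have hACAC : (inner ℝ (splitDelta A C) (splitDelta A C) : ℝ) = a * c := inner_splitDelta_self hAC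
    have hACAD : (inner ℝ (splitDelta A C) (splitDelta A D) : ℝ) = 0 := inner_splitDelta_zero hAC hAD.symm hCD.symm
    have hACBC : (inner ℝ (splitDelta A C) (splitDelta B C) : ℝ) = 0 := inner_splitDelta_zero' hAC hAB.symm hBC
    have hACBD : (inner ℝ (splitDelta A C) (splitDelta B D) : ℝ) = 0 := inner_splitDelta_zero hAC hAD.symm hCD.symm
    have hACCD : (inner ℝ (splitDelta A C) (splitDelta C D) : ℝ) = 0 := inner_splitDelta_zero hAC hAD.symm hCD.symm
    have hACCB : (inner ℝ (splitDelta A C) (splitDelta C B) : ℝ) = 0 := inner_splitDelta_zero hAC hAB.symm hBC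
    have hADAB : (inner ℝ (splitDelta A D) (splitDelta A B) : ℝ) = 0 := inner_splitDelta_zero hAD hAB.symm hBD
    have hADAC : (inner ℝ (splitDelta A D) (splitDelta A C) : ℝ) = 0 := inner_splitDelta_zero hAD hAC.symm hCD
    have hADAD : (inner ℝ (splitDelta A D) (splitDelta A D) : ℝ) = a * d := inner_splitDelta_self hAD
    have hADBC : (inner ℝ (splitDelta A D) (splitDelta B C) : ℝ) = 0 := inner_splitDelta_zero hAD hAC.symm hCD
    have hADBD : (inner ℝ (splitDelta A D) (splitDelta B D) : ℝ) = 0 := inner_splitDelta_zero' hAD hAB.symm hBD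
    have hADCD : (inner ℝ (splitDelta A D) (splitDelta C D) : ℝ) = 0 := inner_splitDelta_zero' hAD hAC.symm hCD
    have hADCB : (inner ℝ (splitDelta A D) (splitDelta C B) : ℝ) = 0 := inner_splitDelta_zero hAD hAB.symm hBD
    have hBCAB : (inner ℝ (splitDelta B C) (splitDelta A B) : ℝ) = 0 := inner_splitDelta_zero' hBC hAB hAC
    have hBCAC : (inner ℝ (splitDelta B C) (splitDelta A C) : ℝ) = 0 := inner_splitDelta_zero' hBC hAB hAC
    have hBCAD : (inner ℝ (splitDelta B C) (splitDelta A D) : ℝ) = 0 := inner_splitDelta_zero hBC hBD.symm hCD.symm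
    have hBCBC : (inner ℝ (splitDelta B C) (splitDelta B C) : ℝ) = b * c := inner_splitDelta_self hBC
    have hBCBD : (inner ℝ (splitDelta B C) (splitDelta B D) : ℝ) = 0 := inner_splitDelta_zero hBC hBD.symm hCD.symm
    have hBCCD : (inner ℝ (splitDelta B C) (splitDelta C D) : ℝ) = 0 := inner_splitDelta_zero hBC hBD.symm hCD.symm
    have hBCCB : (inner ℝ (splitDelta B C) (splitDelta C B) : ℝ) = b * c := by
      rw [splitDelta_comm C B]; exact inner_splitDelta_self hBC
    have hBDAB : (inner ℝ (splitDelta B D) (splitDelta A B) : ℝ) = 0 := inner_splitDelta_zero' hBD hAB hAD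
    have hBDAC : (inner ℝ (splitDelta B D) (splitDelta A C) : ℝ) = 0 := inner_splitDelta_zero hBD hBC.symm hCD
    have hBDAD : (inner ℝ (splitDelta B D) (splitDelta A D) : ℝ) = 0 := inner_splitDelta_zero' hBD hAB hAD
    have hBDBC : (inner ℝ (splitDelta B D) (splitDelta B C) : ℝ) = 0 := inner_splitDelta_zero hBD hBC.symm hCD
    have hBDBD : (inner ℝ (splitDelta B D) (splitDelta B D) : ℝ) = b * d := inner_splitDelta_self hBD
    have hBDCD : (inner ℝ (splitDelta B D) (splitDelta C D) : ℝ) = 0 := inner_splitDelta_zero' hBD hBC.symm hCD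
    have hBDCB : (inner ℝ (splitDelta B D) (splitDelta C B) : ℝ) = 0 := inner_splitDelta_zero' hBD hBC.symm hCD
    have hCDAB : (inner ℝ (splitDelta C D) (splitDelta A B) : ℝ) = 0 := inner_splitDelta_zero hCD hBC hBD
    have hCDAC : (inner ℝ (splitDelta C D) (splitDelta A C) : ℝ) = 0 := inner_splitDelta_zero' hCD hAC hAD
    have hCDAD : (inner ℝ (splitDelta C D) (splitDelta A D) : ℝ) = 0 := inner_splitDelta_zero' hCD hAC hAD
    have hCDBC : (inner ℝ (splitDelta C D) (splitDelta B C) : ℝ) = 0 := inner_splitDelta_zero' hCD hBC hBD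
    have hCDBD : (inner ℝ (splitDelta C D) (splitDelta B D) : ℝ) = 0 := inner_splitDelta_zero' hCD hBC hBD
    have hCDCD : (inner ℝ (splitDelta C D) (splitDelta C D) : ℝ) = c * d := inner_splitDelta_self hCD
    have hCDCB : (inner ℝ (splitDelta C D) (splitDelta C B) : ℝ) = 0 := inner_splitDelta_zero hCD hBC hBD
    have hCBAB : (inner ℝ (splitDelta C B) (splitDelta A B) : ℝ) = 0 := inner_splitDelta_zero' hBC.symm hAC hAB
    have hCBAC : (inner ℝ (splitDelta C B) (splitDelta A C) : ℝ) = 0 := inner_splitDelta_zero' hBC.symm hAC hAB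
    have hCBAD : (inner ℝ (splitDelta C B) (splitDelta A D) : ℝ) = 0 := inner_splitDelta_zero hBC.symm hCD.symm hBD.symm
    have hCBBC : (inner ℝ (splitDelta C B) (splitDelta B C) : ℝ) = c * b := by
      rw [splitDelta_comm B C]; exact inner_splitDelta_self hBC.symm
    have hCBBD : (inner ℝ (splitDelta C B) (splitDelta B D) : ℝ) = 0 := inner_splitDelta_zero hBC.symm hCD.symm hBD.symm
    have hCBCD : (inner ℝ (splitDelta C B) (splitDelta C D) : ℝ) = 0 := inner_splitDelta_zero hBC.symm hCD.symm hBD.symm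
    have hCBCB : (inner ℝ (splitDelta C B) (splitDelta C B) : ℝ) = c * b := inner_splitDelta_self hBC.symm
    clear_value a b c d pAB pAC
    have ha := ha0.le; have hb := hb0.le; have hc := hc0.le; have hd := hd0.le
    have hQ0 : (0:ℝ) ≤ ((a + b) * (a + c) * (b + d) * (c + d) - (b * c + a * d) ^ 2) := by
      have hQe : ((a + b) * (a + c) * (b + d) * (c + d) - (b * c + a * d) ^ 2) =
          a^2*b*c + a^2*b*d + a^2*c*d + a*b^2*c + a*b^2*d + a*b*c^2 + a*b*d^2 +
          a*c^2*d + a*c*d^2 + b^2*c*d + b*c^2*d + b*c*d^2 := by ring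
      rw [hQe]
      linarith [mul_nonneg (mul_nonneg (mul_nonneg ha ha) hb) hc,
        mul_nonneg (mul_nonneg (mul_nonneg ha ha) hb) hd,
        mul_nonneg (mul_nonneg (mul_nonneg ha ha) hc) hd,
        mul_nonneg (mul_nonneg (mul_nonneg ha hb) hb) hc,
        mul_nonneg (mul_nonneg (mul_nonneg ha hb) hb) hd,
        mul_nonneg (mul_nonneg (mul_nonneg ha hb) hc) hc,
        mul_nonneg (mul_nonneg (mul_nonneg ha hb) hd) hd,
        mul_nonneg (mul_nonneg (mul_nonneg ha hc) hc) hd,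
        mul_nonneg (mul_nonneg (mul_nonneg ha hc) hd) hd,
        mul_nonneg (mul_nonneg (mul_nonneg hb hb) hc) hd,
        mul_nonneg (mul_nonneg (mul_nonneg hb hc) hc) hd,
        mul_nonneg (mul_nonneg (mul_nonneg hb hc) hd) hd]
    have hP0 : (0:ℝ) < (a + b) * (a + c) * (b + d) * (c + d) :=
      mul_pos (mul_pos (mul_pos (add_pos ha0 hb0) (add_pos ha0 hc0))
        (add_pos hb0 hd0)) (add_pos hc0 hd0)
    have hxy : (inner ℝ pAB pAC : ℝ) = -(b * c + a * d) * ((a * b * c * d) * ((a + b) * (a + c) * (b + d) * (c + d) - (b * c + a * d) ^ 2)) := by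
      rw [hpx, hpy]
      simp only [inner_add_left, inner_add_right, real_inner_smul_left, real_inner_smul_right,
        hABAB, hABAC, hABAD, hABBC, hABBD, hABCD, hABCB, hACAB, hACAC, hACAD, hACBC, hACBD, hACCD, hACCB, hADAB, hADAC, hADAD, hADBC, hADBD, hADCD, hADCB, hBCAB, hBCAC, hBCAD, hBCBC, hBCBD, hBCCD, hBCCB, hBDAB, hBDAC, hBDAD, hBDBC, hBDBD, hBDCD, hBDCB, hCDAB, hCDAC, hCDAD, hCDBC, hCDBD, hCDCD, hCDCB, hCBAB, hCBAC, hCBAD, hCBBC, hCBBD, hCBCD, hCBCB]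
      ring
    have hxx : (inner ℝ pAB pAB : ℝ) =
        ((a * b * c * d) * ((a + b) * (c + d))) * ((a + b) * (a + c) * (b + d) * (c + d) - (b * c + a * d) ^ 2) := by
      rw [hpx]
      simp only [inner_add_left, inner_add_right, real_inner_smul_left, real_inner_smul_right,
        hABAB, hABAC, hABAD, hABBC, hABBD, hABCD, hABCB, hACAB, hACAC, hACAD, hACBC, hACBD, hACCD, hACCB, hADAB, hADAC, hADAD, hADBC, hADBD, hADCD, hADCB, hBCAB, hBCAC, hBCAD, hBCBC, hBCBD, hBCCD, hBCCB, hBDAB, hBDAC, hBDAD, hBDBC, hBDBD, hBDCD, hBDCB, hCDAB, hCDAC, hCDAD, hCDBC, hCDBD, hCDCD, hCDCB, hCBAB, hCBAC, hCBAD, hCBBC, hCBBD, hCBCD, hCBCB]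
      ring
    have hyy : (inner ℝ pAC pAC : ℝ) =
        ((a * b * c * d) * ((a + c) * (b + d))) * ((a + b) * (a + c) * (b + d) * (c + d) - (b * c + a * d) ^ 2) := by
      rw [hpy]
      simp only [inner_add_left, inner_add_right, real_inner_smul_left, real_inner_smul_right,
        hABAB, hABAC, hABAD, hABBC, hABBD, hABCD, hABCB, hACAB, hACAC, hACAD, hACBC, hACBD, hACCD, hACCB, hADAB, hADAC, hADAD, hADBC, hADBD, hADCD, hADCB, hBCAB, hBCAC, hBCAD, hBCBC, hBCBD, hBCCD, hBCCB, hBDAB, hBDAC, hBDAD, hBDBC, hBDBD, hBDCD, hBDCB, hCDAB, hCDAC, hCDAD, hCDBC, hCDBD, hCDCD, hCDCB, hCBAB, hCBAC, hCBAD, hCBBC, hCBBD, hCBCD, hCBCB]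
      ring
    have hM0 : (0:ℝ) ≤ a * b * c * d * ((a + b) * (a + c) * (b + d) * (c + d) - (b * c + a * d) ^ 2) := by
      apply mul_nonneg _ hQ0
      positivity
    have hsq : ‖pAB‖ * ‖pAC‖ = (a * b * c * d * ((a + b) * (a + c) * (b + d) * (c + d) - (b * c + a * d) ^ 2)) *
        Real.sqrt ((a + b) * (a + c) * (b + d) * (c + d)) := by
      rw [norm_eq_sqrt_real_inner pAB, norm_eq_sqrt_real_inner pAC, hxx, hyy,
        ← Real.sqrt_mul (by positivity)]
      rw [show ((a * b * c * d) * ((a + b) * (c + d))) * ((a + b) * (a + c) * (b + d) * (c + d) - (b * c + a * d) ^ 2) *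
          (((a * b * c * d) * ((a + c) * (b + d))) * ((a + b) * (a + c) * (b + d) * (c + d) - (b * c + a * d) ^ 2)) =
          (a * b * c * d * ((a + b) * (a + c) * (b + d) * (c + d) - (b * c + a * d) ^ 2)) ^ 2 * ((a + b) * (a + c) * (b + d) * (c + d)) by ring]
      rw [Real.sqrt_mul (sq_nonneg _), Real.sqrt_sq hM0]
    rw [hxy, hsq]
    have hsP : Real.sqrt ((a + b) * (a + c) * (b + d) * (c + d)) ≠ 0 :=
      ne_of_gt (Real.sqrt_pos.mpr hP0)
    field_simp
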